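/- arXiv:1512.05438 — 5 statements merged into one kernel-verified Lean document; each statement's English description precedes it below -/
import Mathlib

section
/- Let T : ℕ → ℕ be the shortcut Collatz map. For all k, m ∈ ℕ and all i ∈ ℕ with i < 2^k, we have T^k(2^k·m + i) = 3^{p_k(i)}·m + T^k(i), where p_k(i) is the number of indices r with 0 ≤ r < k such that T^r(i) is odd. -/
/-- The shortcut Collatz map: `T x = x / 2` if `x` is even, `(3 * x + 1) / 2` if `x` is odd. -/
def T : ℕ → ℕ := fun x => if x % 2 = 0 then x / 2 else (3 * x + 1) / 2

/-- `p k i` is the number of indices `r < k` such that `T^[r] i` is odd. -/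
def p (k i : ℕ) : ℕ := ((Finset.range k).filter (fun r => Odd (T^[r] i))).card

lemma p_succ (k i : ℕ) : p (k + 1) i = p k i + (if Odd (T^[k] i) then 1 else 0) := by
  simp only [p, Finset.range_add_one, Finset.filter_insert]
  split
  · rw [Finset.card_insert_of_notMem (by simp)]
  · simp

lemma collatz_gen (k m i : ℕ) : T^[k] (2 ^ k * m + i) = 3 ^ (p k i) * m + T^[k] i := by
  induction k generalizing m with
  | zero => simp [p]
  | succ k ih =>
    have h2 : 2 ^ (k + 1) * m + i = 2 ^ k * (2 * m) + i := by ring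
    rw [Function.iterate_succ_apply', Function.iterate_succ_apply', h2, ih, p_succ]
    set q := 3 ^ (p k i) with hq
    have hqodd : q % 2 = 1 := by
      rw [hq, Nat.pow_mod]; norm_num
    have hl : q * (2 * m) = 2 * (q * m) := by ring
    rw [hl]
    rcases Nat.even_or_odd (T^[k] i) with he | ho
    · rw [if_neg (by simpa [Nat.not_odd_iff_even] using he)]
      obtain ⟨e, he⟩ := he
      rw [he]
      simp only [T, Nat.add_zero, ← hq]
      have h1 : (2 * (q * m) + (e + e)) % 2 = 0 := by omega
      rw [if_pos h1, if_pos (by omega)]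
      omega
    · rw [if_pos ho]
      obtain ⟨e, he⟩ := ho
      rw [he]
      simp only [T]
      have h1 : (2 * (q * m) + (2 * e + 1)) % 2 ≠ 0 := by omega
      rw [if_neg h1, if_neg (by omega)]
      have h3 : 3 ^ (p k i + 1) * m = 3 * (q * m) := by rw [hq]; ring
      rw [h3]
      omega

theorem collatz_class_formula (k m i : ℕ) (hi : i < 2 ^ k) :
    T^[k] (2 ^ k * m + i) = 3 ^ (p k i) * m + T^[k] i := collatz_gen k m i
end

section
/- Let x_0, x_1, …, x_m ∈ ℕ and k_1, …, k_m ∈ ℕ (with m ≥ 1) satisfy 3·x_{r−1} + 1 = 2^{k_r}·x_r for all 1 ≤ r ≤ m, write v_r = k_1 + … + k_r with v_0 = 0, and suppose x_m = 1. Then 3^m·x_0 + Σ_{t=0}^{m−1} 3^{m−1−t}·2^{v_t} = 2^{v_m} (equivalently, x_0 = (2^{v_m} − Σ_{t=0}^{m−1} 3^{m−1−t}·2^{v_t}) / 3^m, the Böhm–Sontacchi representation). -/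
theorem bohm_sontacchi (m : ℕ) (hm : 1 ≤ m) (x k : ℕ → ℕ)
    (h : ∀ r, 1 ≤ r → r ≤ m → 3 * x (r - 1) + 1 = 2 ^ (k r) * x r)
    (hxm : x m = 1) :
    3 ^ m * x 0 +
        ∑ t ∈ Finset.range m, 3 ^ (m - 1 - t) * 2 ^ (∑ i ∈ Finset.Icc 1 t, k i) =
      2 ^ (∑ i ∈ Finset.Icc 1 m, k i) := by
  have key : ∀ r, r ≤ m →
      3 ^ r * x 0 +
        ∑ t ∈ Finset.range r, 3 ^ (r - 1 - t) * 2 ^ (∑ i ∈ Finset.Icc 1 t, k i) =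
      2 ^ (∑ i ∈ Finset.Icc 1 r, k i) * x r := by
    intro r
    induction r with
    | zero => simp
    | succ n ih =>
      intro hn
      have ihn := ih (Nat.le_of_succ_le hn)
      have hstep := h (n + 1) (Nat.le_add_left 1 n) hn
      simp only [Nat.add_sub_cancel] at hstep
      have hmul := congrArg (· * (3 * x n + 1)) (rfl : (2:ℕ) ^ (∑ i ∈ Finset.Icc 1 n, k i) = _)
      have e1 : 3 * (3 ^ n * x 0 +
          ∑ t ∈ Finset.range n, 3 ^ (n - 1 - t) * 2 ^ (∑ i ∈ Finset.Icc 1 t, k i))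
            + 2 ^ (∑ i ∈ Finset.Icc 1 n, k i)
          = 2 ^ (∑ i ∈ Finset.Icc 1 n, k i) * (3 * x n + 1) := by
        rw [ihn]; ring
      have e2 : 3 ^ (n + 1) * x 0 +
          ∑ t ∈ Finset.range (n + 1), 3 ^ (n + 1 - 1 - t) * 2 ^ (∑ i ∈ Finset.Icc 1 t, k i)
          = 3 * (3 ^ n * x 0 +
          ∑ t ∈ Finset.range n, 3 ^ (n - 1 - t) * 2 ^ (∑ i ∈ Finset.Icc 1 t, k i))
            + 2 ^ (∑ i ∈ Finset.Icc 1 n, k i) := by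
        rw [Finset.sum_range_succ, mul_add, Finset.mul_sum]
        have hs : ∀ t ∈ Finset.range n,
            3 * (3 ^ (n - 1 - t) * 2 ^ (∑ i ∈ Finset.Icc 1 t, k i))
            = 3 ^ (n + 1 - 1 - t) * 2 ^ (∑ i ∈ Finset.Icc 1 t, k i) := by
          intro t ht
          rw [Finset.mem_range] at ht
          rw [← mul_assoc, ← pow_succ']
          congr 2
          omega
        rw [Finset.sum_congr rfl hs]
        simp [pow_succ]
        ring
      rw [e2, e1, hstep, ← mul_assoc, ← pow_add, ← Finset.sum_Icc_succ_top (Nat.le_add_left 1 n)]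
  have := key m le_rfl
  rw [hxm, mul_one] at this
  exact this
end

section
/- Let T : ℕ → ℕ be the shortcut Collatz map. For every M ≥ 2 and every n with 1 ≤ n ≤ M − 1, the number of elements x of {1, 2, …, 2^M} with T^n(x) > T^{n−1}(x) equals 2^{M−1}, and the number of elements x of {1, 2, …, 2^M} with T^n(x) < T^{n−1}(x) also equals 2^{M−1}. In particular these two counts are equal at every such step. -/
lemma T_even {x : ℕ} (h : x % 2 = 0) : T x = x / 2 := by simp [T, h]

lemma T_odd {x : ℕ} (h : x % 2 = 1) : T x = (3 * x + 1) / 2 := by simp [T, h]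

lemma T_pos {x : ℕ} (h : 1 ≤ x) : 1 ≤ T x := by
  rcases Nat.even_or_odd x with he | ho
  · rw [T_even (Nat.even_iff.mp he)]
    have := Nat.even_iff.mp he
    omega
  · rw [T_odd (Nat.odd_iff.mp ho)]
    omega

lemma T_iter_pos (k : ℕ) {x : ℕ} (h : 1 ≤ x) : 1 ≤ T^[k] x := by
  induction k with
  | zero => simpa using h
  | succ k ih => rw [Function.iterate_succ_apply']; exact T_pos ih

lemma T_iter_zero (k : ℕ) : T^[k] 0 = 0 := by
  induction k with
  | zero => rfl
  | succ k ih => rw [Function.iterate_succ_apply', ih]; simp [T]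

lemma T_gt_iff {y : ℕ} (h : 1 ≤ y) : y < T y ↔ y % 2 = 1 := by
  rcases Nat.even_or_odd y with he | ho
  · have h2 := Nat.even_iff.mp he
    rw [T_even h2]; omega
  · have h2 := Nat.odd_iff.mp ho
    rw [T_odd h2]; omega

lemma T_lt_iff {y : ℕ} (h : 1 ≤ y) : T y < y ↔ y % 2 = 0 := by
  rcases Nat.even_or_odd y with he | ho
  · have h2 := Nat.even_iff.mp he
    rw [T_even h2]; omega
  · have h2 := Nat.odd_iff.mp ho
    rw [T_odd h2]; omega

/-- Key structural lemma: adding a multiple of `2^(k+1)` changes `T^[k]` by a multiple of `2`. -/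
lemma T_iter_add (k : ℕ) : ∀ x a : ℕ, ∃ c, T^[k] (x + 2 ^ (k + 1) * a) = T^[k] x + 2 * (c * a) := by
  induction k with
  | zero =>
    intro x a
    refine ⟨1, ?_⟩
    simp only [Function.iterate_zero, id_eq, pow_succ, pow_zero, one_mul]
  | succ k ih =>
    intro x a
    obtain ⟨c, hc⟩ := ih x (2 * a)
    have h1 : x + 2 ^ (k + 2) * a = x + 2 ^ (k + 1) * (2 * a) := by ring
    rw [Function.iterate_succ_apply', Function.iterate_succ_apply', h1, hc]
    have h4 : 2 * (c * (2 * a)) = 4 * (c * a) := by ring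
    rw [h4]
    set y := T^[k] x with hy
    set u := c * a with hu
    rcases Nat.even_or_odd y with he | ho
    · have h2 := Nat.even_iff.mp he
      have h3 : (y + 4 * u) % 2 = 0 := by omega
      refine ⟨c, ?_⟩
      rw [T_even h2, T_even h3]
      omega
    · have h2 := Nat.odd_iff.mp ho
      have h3 : (y + 4 * u) % 2 = 1 := by omega
      refine ⟨3 * c, ?_⟩
      have h5 : 2 * (3 * c * a) = 6 * u := by rw [hu]; ring
      rw [T_odd h2, T_odd h3, h5]
      omega

/-- Parity of `T^[k] x` only depends on `x` mod `2^(k+1)`. -/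
lemma T_iter_mod (k x : ℕ) : T^[k] x % 2 = T^[k] (x % 2 ^ (k + 1)) % 2 := by
  obtain ⟨c, hc⟩ := T_iter_add k (x % 2 ^ (k + 1)) (x / 2 ^ (k + 1))
  have hx : x = x % 2 ^ (k + 1) + 2 ^ (k + 1) * (x / 2 ^ (k + 1)) := by
    rw [Nat.mod_add_div]
  conv_lhs => rw [hx]
  rw [hc]
  omega

/-- Counting a `mod m`-periodic predicate over `range (m * q)`. -/
lemma count_mod (p : ℕ → Prop) [DecidablePred p] (m : ℕ) (q : ℕ) :
    ((Finset.range (m * q)).filter (fun x => p (x % m))).card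
      = q * ((Finset.range m).filter (fun x => p (x % m))).card := by
  induction q with
  | zero => simp
  | succ q ih =>
    have h1 : m * (q + 1) = m * q + m := by ring
    rw [h1, Finset.range_add, Finset.filter_union, Finset.card_union_of_disjoint,
      Finset.filter_map, Finset.card_map, ih]
    · have h2 : (Finset.range m).filter ((fun x => p (x % m)) ∘ (addLeftEmbedding (m * q)))
          = (Finset.range m).filter (fun x => p (x % m)) := by
        apply Finset.filter_congr
        intro x _
        simp [addLeftEmbedding, Nat.mul_add_mod]
      rw [h2]
      ring
    · apply Finset.disjoint_left.mpr
      intro x hx hx2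
      simp only [Finset.mem_filter, Finset.mem_range, Finset.mem_map,
        addLeftEmbedding_apply] at hx hx2
      obtain ⟨⟨y, hy, hyx⟩, -⟩ := hx2
      omega

/-- Counting through an injective self-map of `range m`. -/
lemma count_comp (p : ℕ → Prop) [DecidablePred p] (m : ℕ) (f : ℕ → ℕ)
    (hinj : ∀ a < m, ∀ b < m, f a = f b → a = b)
    (hmap : ∀ a < m, f a < m) :
    ((Finset.range m).filter p).card = ((Finset.range m).filter (fun x => p (f x))).card := by
  have hinj' : Set.InjOn f (Finset.range m : Set ℕ) := by
    intro a ha b hb hab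
    simp only [Finset.coe_range, Set.mem_Iio] at ha hb
    exact hinj a ha b hb hab
  have himg : (Finset.range m).image f = Finset.range m := by
    apply Finset.eq_of_subset_of_card_le
    · intro z hz
      simp only [Finset.mem_image, Finset.mem_range] at hz ⊢
      obtain ⟨a, ha, rfl⟩ := hz
      exact hmap a ha
    · rw [Finset.card_image_of_injOn hinj', Finset.card_range]
  conv_lhs => rw [← himg]
  rw [Finset.filter_image, Finset.card_image_of_injOn]
  exact hinj'.mono (Finset.coe_subset.mpr (Finset.filter_subset _ _))

/-- Base counting lemma: among `0, …, 2^(k+1) - 1`, exactly `2^k` values have `T^[k]` odd. -/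
lemma count_base (k : ℕ) :
    ((Finset.range (2 ^ (k + 1))).filter (fun x => T^[k] x % 2 = 1)).card = 2 ^ k := by
  induction k with
  | zero => decide
  | succ k ih =>
    have h2m : 2 ^ (k + 2) = 2 * 2 ^ (k + 1) := by ring
    have hsplit : Finset.range (2 ^ (k + 2))
        = (Finset.range (2 ^ (k + 1))).image (fun y => 2 * y)
          ∪ (Finset.range (2 ^ (k + 1))).image (fun y => 2 * y + 1) := by
      ext x
      simp only [Finset.mem_union, Finset.mem_image, Finset.mem_range]
      constructor
      · intro hx
        rcases Nat.even_or_odd x with he | ho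
        · have := Nat.even_iff.mp he
          exact Or.inl ⟨x / 2, by omega, by omega⟩
        · have := Nat.odd_iff.mp ho
          exact Or.inr ⟨x / 2, by omega, by omega⟩
      · rintro (⟨y, hy, rfl⟩ | ⟨y, hy, rfl⟩) <;> omega
    rw [hsplit, Finset.filter_union, Finset.card_union_of_disjoint, Finset.filter_image,
      Finset.filter_image, Finset.card_image_of_injOn, Finset.card_image_of_injOn]
    · have heven : ∀ y : ℕ, T^[k + 1] (2 * y) = T^[k] y := by
        intro y
        rw [Function.iterate_succ_apply, T_even (by omega)]
        congr 1
        omega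
      have hodd : ∀ y : ℕ, T^[k + 1] (2 * y + 1) = T^[k] (3 * y + 2) := by
        intro y
        rw [Function.iterate_succ_apply, T_odd (by omega)]
        congr 1
        omega
      have h1 : (Finset.range (2 ^ (k + 1))).filter (fun y => T^[k + 1] (2 * y) % 2 = 1)
          = (Finset.range (2 ^ (k + 1))).filter (fun y => T^[k] y % 2 = 1) := by
        apply Finset.filter_congr; intro y _; rw [heven]
      have h2 : (Finset.range (2 ^ (k + 1))).filter (fun y => T^[k + 1] (2 * y + 1) % 2 = 1)
          = (Finset.range (2 ^ (k + 1))).filter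
              (fun y => T^[k] ((3 * y + 2) % 2 ^ (k + 1)) % 2 = 1) := by
        apply Finset.filter_congr; intro y _
        rw [hodd, T_iter_mod k (3 * y + 2)]
      rw [h1, h2, ih]
      have hco : Nat.Coprime 3 (2 ^ (k + 1)) := Nat.Coprime.pow_right _ (by decide)
      have hcount : ((Finset.range (2 ^ (k + 1))).filter (fun z => T^[k] z % 2 = 1)).card
          = ((Finset.range (2 ^ (k + 1))).filter
              (fun y => T^[k] ((3 * y + 2) % 2 ^ (k + 1)) % 2 = 1)).card := by
        apply count_comp (fun z => T^[k] z % 2 = 1) (2 ^ (k + 1)) (fun y => (3 * y + 2) % 2 ^ (k + 1))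
        · intro a ha b hb hab
          have h3 : 3 * a + 2 ≡ 3 * b + 2 [MOD 2 ^ (k + 1)] := hab
          have h4 : 3 * a ≡ 3 * b [MOD 2 ^ (k + 1)] := Nat.ModEq.add_right_cancel' 2 h3
          have h5 : a ≡ b [MOD 2 ^ (k + 1)] := h4.cancel_left_of_coprime (by simpa using hco)
          exact Nat.ModEq.eq_of_lt_of_lt h5 ha hb
        · intro a _
          exact Nat.mod_lt _ (by positivity)
      rw [← hcount, ih]
      ring
    · intro a _ b _ hab; simpa using hab
    · intro a _ b _ hab; simpa using hab
    · apply Finset.disjoint_left.mpr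
      intro x hx hx2
      simp only [Finset.mem_filter, Finset.mem_image, Finset.mem_range] at hx hx2
      obtain ⟨⟨y, _, rfl⟩, -⟩ := hx
      obtain ⟨⟨z, _, hz⟩, -⟩ := hx2
      omega

theorem half_increase_half_decrease (M n : ℕ) (hM : 2 ≤ M) (hn1 : 1 ≤ n) (hnM : n ≤ M - 1) :
    ((Finset.Icc 1 (2 ^ M)).filter (fun x => T^[n] x > T^[n - 1] x)).card = 2 ^ (M - 1) ∧
    ((Finset.Icc 1 (2 ^ M)).filter (fun x => T^[n] x < T^[n - 1] x)).card = 2 ^ (M - 1) := by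
  obtain ⟨k, rfl⟩ : ∃ k, n = k + 1 := ⟨n - 1, by omega⟩
  simp only [Nat.add_sub_cancel, gt_iff_lt]
  set N := 2 ^ M with hN
  have hiff : ∀ x : ℕ, 1 ≤ x → (T^[k] x < T^[k + 1] x ↔ T^[k] x % 2 = 1) := by
    intro x hx
    rw [Function.iterate_succ_apply']
    exact T_gt_iff (T_iter_pos k hx)
  have hiff' : ∀ x : ℕ, 1 ≤ x → (T^[k + 1] x < T^[k] x ↔ T^[k] x % 2 = 0) := by
    intro x hx
    rw [Function.iterate_succ_apply']
    exact T_lt_iff (T_iter_pos k hx)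
  have hMk : k + 1 ≤ M - 1 := hnM
  have hdvd : 2 ^ (k + 1) * 2 ^ (M - (k + 1)) = N := by
    rw [hN, ← pow_add]
    congr 1
    omega
  have hNmod : N % 2 ^ (k + 1) = 0 := by
    have : 2 ^ (k + 1) ∣ N := by
      rw [hN]
      exact pow_dvd_pow 2 (by omega)
    omega
  have hgt : ((Finset.Icc 1 N).filter (fun x => T^[k] x < T^[k + 1] x)).card = 2 ^ (M - 1) := by
    have h0 : (Finset.Icc 1 N).filter (fun x => T^[k] x < T^[k + 1] x)
        = (Finset.range N).filter (fun x => T^[k] (x % 2 ^ (k + 1)) % 2 = 1) := by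
      ext x
      simp only [Finset.mem_filter, Finset.mem_Icc, Finset.mem_range]
      constructor
      · rintro ⟨⟨hx1, hx2⟩, hx3⟩
        have hodd := (hiff x hx1).mp hx3
        rw [T_iter_mod] at hodd
        refine ⟨?_, hodd⟩
        rcases eq_or_lt_of_le hx2 with rfl | h
        · rw [hNmod, T_iter_zero] at hodd
          simp at hodd
        · exact h
      · rintro ⟨hx1, hx2⟩
        have hx0 : 1 ≤ x := by
          rcases Nat.eq_zero_or_pos x with rfl | h
          · rw [Nat.zero_mod, T_iter_zero] at hx2
            simp at hx2
          · exact h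
        refine ⟨⟨hx0, le_of_lt hx1⟩, ?_⟩
        apply (hiff x hx0).mpr
        rw [T_iter_mod]
        exact hx2
    have hc1 := count_mod (fun z => T^[k] z % 2 = 1) (2 ^ (k + 1)) (2 ^ (M - (k + 1)))
    rw [hdvd] at hc1
    have hc2 : (Finset.range (2 ^ (k + 1))).filter (fun x => T^[k] (x % 2 ^ (k + 1)) % 2 = 1)
        = (Finset.range (2 ^ (k + 1))).filter (fun x => T^[k] x % 2 = 1) := by
      apply Finset.filter_congr
      intro x hx
      simp only [Finset.mem_range] at hx
      rw [Nat.mod_eq_of_lt hx]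
    rw [h0, hc1, hc2, count_base, ← pow_add]
    congr 1
    omega
  refine ⟨hgt, ?_⟩
  have hcompl : (Finset.Icc 1 N).filter (fun x => T^[k + 1] x < T^[k] x)
      = Finset.Icc 1 N \ (Finset.Icc 1 N).filter (fun x => T^[k] x < T^[k + 1] x) := by
    rw [← Finset.filter_not]
    apply Finset.filter_congr
    intro x hx
    simp only [Finset.mem_Icc] at hx
    have h1 := hiff x hx.1
    have h2 := hiff' x hx.1
    constructor <;> intro h <;> omega
  rw [hcompl, Finset.card_sdiff_of_subset (Finset.filter_subset _ _), hgt, Nat.card_Icc]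
  have h2M : N = 2 * 2 ^ (M - 1) := by
    rw [hN]
    rw [← pow_succ']
    congr 1
    omega
  omega
end

section
/- Let T : ℕ → ℕ be the shortcut Collatz map. For every n ∈ ℕ, every i ∈ ℕ with i < 2^n, and every m ∈ ℕ: T^n(2^{n+1}·m + i) has the same parity as T^n(i), while T^n(2^{n+1}·m + 2^n + i) has the opposite parity to T^n(i). (That is, of the two residue classes modulo 2^{n+1} contained in the class of i modulo 2^n, all elements of one experience an increase at step n+1 and all elements of the other experience a decrease at step n+1.) -/
lemma T_step (b i : ℕ) : T (2 * b + i) = 3 ^ (i % 2) * b + T i := by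
  rcases Nat.even_or_odd i with h | h
  · obtain ⟨k, hk⟩ := h
    subst hk
    have h1 : (2 * b + (k + k)) % 2 = 0 := by omega
    have h2 : (k + k) % 2 = 0 := by omega
    simp only [T]
    rw [h1, h2]
    simp
    omega
  · obtain ⟨k, hk⟩ := h
    subst hk
    have h1 : (2 * b + (2 * k + 1)) % 2 = 1 := by omega
    have h2 : (2 * k + 1) % 2 = 1 := by omega
    simp only [T]
    rw [h1, h2]
    simp
    omega

lemma T_iter (n : ℕ) : ∀ i a : ℕ, ∃ c : ℕ, T^[n] (2 ^ n * a + i) = 3 ^ c * a + T^[n] i := by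
  induction n with
  | zero => intro i a; exact ⟨0, by simp⟩
  | succ n ih =>
    intro i a
    have key : 2 ^ (n + 1) * a + i = 2 * (2 ^ n * a) + i := by ring_nf
    obtain ⟨c, hc⟩ := ih (T i) (3 ^ (i % 2) * a)
    refine ⟨c + i % 2, ?_⟩
    rw [key, Function.iterate_succ_apply, Function.iterate_succ_apply, T_step]
    have : 3 ^ (i % 2) * (2 ^ n * a) + T i = 2 ^ n * (3 ^ (i % 2) * a) + T i := by ring
    rw [this, hc, ← mul_assoc, ← pow_add]

theorem collatz_split_parity (n i m : ℕ) (hi : i < 2 ^ n) :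
    T^[n] (2 ^ (n + 1) * m + i) % 2 = T^[n] i % 2 ∧
    T^[n] (2 ^ (n + 1) * m + 2 ^ n + i) % 2 ≠ T^[n] i % 2 := by
  obtain ⟨c, hc⟩ := T_iter n i (2 * m)
  obtain ⟨d, hd⟩ := T_iter n i (2 * m + 1)
  have h1 : 2 ^ (n + 1) * m + i = 2 ^ n * (2 * m) + i := by ring
  have h2 : 2 ^ (n + 1) * m + 2 ^ n + i = 2 ^ n * (2 * m + 1) + i := by ring
  have h3d : 3 ^ d % 2 = 1 := Nat.odd_iff.mp (Odd.pow (by decide))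
  rw [h1, hc, h2, hd]
  have heven : 3 ^ c * (2 * m) = 2 * (3 ^ c * m) := by ring
  have hodd : 3 ^ d * (2 * m + 1) % 2 = 1 := by
    rw [Nat.mul_mod, h3d]; omega
  constructor
  · omega
  · omega
end

section
/- Let a, b ∈ ℕ be odd with a ≥ 3, and let T_{a,b} : ℕ → ℕ be the map T_{a,b}(x) = x/2 if x is even and T_{a,b}(x) = (a·x + b)/2 if x is odd. For every M ≥ 2 and every n with 1 ≤ n ≤ M − 1, the number of elements x of {1, 2, …, 2^M} with T_{a,b}^n(x) > T_{a,b}^{n−1}(x) equals 2^{M−1}, and the number of elements x of {1, 2, …, 2^M} with T_{a,b}^n(x) < T_{a,b}^{n−1}(x) also equals 2^{M−1}. -/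
/-- The shortcut map of the `a*n + b` problem:
`Tab a b x = x / 2` if `x` is even, `(a * x + b) / 2` if `x` is odd. -/
def Tab (a b : ℕ) : ℕ → ℕ := fun x => if x % 2 = 0 then x / 2 else (a * x + b) / 2

namespace TabAux

/-- halving respects congruence. -/
lemma half_mod (p u : ℕ) (hu : u % 2 = 0) : u / 2 % p = (u % (2 * p)) / 2 % p := by
  have h := Nat.div_add_mod u (2 * p)
  set q := u / (2 * p) with hq
  set r := u % (2 * p) with hr
  have h' : 2 * (p * q) + r = u := by rw [← mul_assoc]; exact h
  have h2 : r % 2 = 0 ∧ u / 2 = p * q + r / 2 := by omega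
  rw [h2.2, Nat.mul_add_mod]

lemma tab_mod (a b : ℕ) (ha : a % 2 = 1) (hb : b % 2 = 1) (p x y : ℕ)
    (h : x % (2 * p) = y % (2 * p)) : Tab a b x % p = Tab a b y % p := by
  have hpar : x % 2 = y % 2 := by
    have hx : x % 2 = x % (2 * p) % 2 := (Nat.mod_mod_of_dvd x ⟨p, rfl⟩).symm
    have hy : y % 2 = y % (2 * p) % 2 := (Nat.mod_mod_of_dvd y ⟨p, rfl⟩).symm
    rw [hx, hy, h]
  by_cases hx2 : x % 2 = 0
  · have hy2 : y % 2 = 0 := by omega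
    simp only [Tab, hx2, hy2, if_true]
    rw [half_mod p x hx2, half_mod p y hy2, h]
  · have hx2' : x % 2 = 1 := by omega
    have hy2' : y % 2 = 1 := by omega
    simp only [Tab, hx2', hy2']
    norm_num
    have hax : (a * x + b) % 2 = 0 := by
      have : a * x % 2 = 1 := by rw [Nat.mul_mod, ha, hx2']
      omega
    have hay : (a * y + b) % 2 = 0 := by
      have : a * y % 2 = 1 := by rw [Nat.mul_mod, ha, hy2']
      omega
    have hmod : (a * x + b) % (2 * p) = (a * y + b) % (2 * p) :=
      ((Nat.ModEq.mul_left a h).add_right b : _)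
    rw [half_mod p _ hax, half_mod p _ hay, hmod]

lemma tab_iter_mod (a b : ℕ) (ha : a % 2 = 1) (hb : b % 2 = 1) :
    ∀ (k p x y : ℕ), x % (2 ^ k * p) = y % (2 ^ k * p) →
      (Tab a b)^[k] x % p = (Tab a b)^[k] y % p := by
  intro k
  induction k with
  | zero => intro p x y h; simpa using h
  | succ k ih =>
    intro p x y h
    rw [Function.iterate_succ_apply, Function.iterate_succ_apply]
    apply ih p
    apply tab_mod a b ha hb
    have hrw : 2 * (2 ^ k * p) = 2 ^ (k + 1) * p := by ring
    rw [hrw]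
    exact h

lemma tab_pos (a b : ℕ) (hb : b % 2 = 1) (ha3 : 3 ≤ a) (x : ℕ) (hx : 1 ≤ x) :
    1 ≤ Tab a b x := by
  unfold Tab
  by_cases h : x % 2 = 0 <;> simp [h]
  · omega
  · have h3 : 3 * x ≤ a * x := Nat.mul_le_mul_right x ha3
    omega

lemma tab_iter_pos (a b : ℕ) (hb : b % 2 = 1) (ha3 : 3 ≤ a) (k x : ℕ) (hx : 1 ≤ x) :
    1 ≤ (Tab a b)^[k] x := by
  induction k with
  | zero => simpa using hx
  | succ k ih => rw [Function.iterate_succ_apply']; exact tab_pos a b hb ha3 _ ih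

lemma tab_gt_iff (a b : ℕ) (hb : b % 2 = 1) (ha3 : 3 ≤ a) (y : ℕ) (hy : 1 ≤ y) :
    (Tab a b y > y ↔ y % 2 = 1) := by
  unfold Tab
  by_cases h : y % 2 = 0 <;> simp [h]
  · omega
  · have h3 : 3 * y ≤ a * y := Nat.mul_le_mul_right y ha3
    omega

lemma tab_lt_iff (a b : ℕ) (hb : b % 2 = 1) (ha3 : 3 ≤ a) (y : ℕ) (hy : 1 ≤ y) :
    (Tab a b y < y ↔ y % 2 = 0) := by
  unfold Tab
  by_cases h : y % 2 = 0 <;> simp [h]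
  · omega
  · have h3 : 3 * y ≤ a * y := Nat.mul_le_mul_right y ha3
    omega

/-- key injectivity: parity plus `Tab` value mod `2^j` determine `x` mod `2^(j+1)`. -/
lemma key_inj (a b : ℕ) (ha : a % 2 = 1) (hb : b % 2 = 1) (j x y : ℕ)
    (hpar : x % 2 = y % 2) (h : Tab a b x % 2 ^ j = Tab a b y % 2 ^ j) :
    x % 2 ^ (j + 1) = y % 2 ^ (j + 1) := by
  have hco : Nat.gcd (2 ^ (j+1)) a = 1 := by
    have : Nat.Coprime a (2 ^ (j + 1)) :=
      (Nat.Coprime.pow_right _ ((Nat.coprime_two_right).2 ⟨a / 2, by omega⟩))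
    exact (Nat.coprime_comm.1 this)
  by_cases hx2 : x % 2 = 0
  · have hy2 : y % 2 = 0 := by omega
    simp only [Tab, hx2, hy2, if_true] at h
    have h2 : 2 * (x / 2) ≡ 2 * (y / 2) [MOD 2 * 2 ^ j] := Nat.ModEq.mul_left' 2 h
    have hx' : 2 * (x / 2) = x := by omega
    have hy' : 2 * (y / 2) = y := by omega
    have hrw : 2 * 2 ^ j = 2 ^ (j + 1) := by ring
    rw [hx', hy', hrw] at h2
    exact h2
  · have hx2' : x % 2 = 1 := by omega
    have hy2' : y % 2 = 1 := by omega
    have hTx : Tab a b x = (a * x + b) / 2 := by simp [Tab, hx2']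
    have hTy : Tab a b y = (a * y + b) / 2 := by simp [Tab, hy2']
    rw [hTx, hTy] at h
    have h2 : 2 * ((a * x + b) / 2) ≡ 2 * ((a * y + b) / 2) [MOD 2 * 2 ^ j] :=
      Nat.ModEq.mul_left' 2 h
    have hax : (a * x + b) % 2 = 0 := by
      have : a * x % 2 = 1 := by rw [Nat.mul_mod, ha, hx2']
      omega
    have hay : (a * y + b) % 2 = 0 := by
      have : a * y % 2 = 1 := by rw [Nat.mul_mod, ha, hy2']
      omega
    have hx' : 2 * ((a * x + b) / 2) = a * x + b := by omega
    have hy' : 2 * ((a * y + b) / 2) = a * y + b := by omega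
    have hrw : 2 * 2 ^ j = 2 ^ (j + 1) := by ring
    rw [hx', hy', hrw] at h2
    have h3 : a * x ≡ a * y [MOD 2 ^ (j + 1)] := Nat.ModEq.add_right_cancel' b h2
    exact Nat.ModEq.cancel_left_of_coprime hco h3

/-- The doubling counting lemma. -/
lemma double_count (a b : ℕ) (ha : a % 2 = 1) (hb : b % 2 = 1) (j : ℕ)
    (P : ℕ → Prop) [DecidablePred P] :
    ((Finset.range (2 ^ (j + 2))).filter (fun r => P (Tab a b r % 2 ^ (j + 1)))).card
      = 2 * ((Finset.range (2 ^ (j + 1))).filter P).card := by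
  classical
  set ψ : ℕ → ℕ × ℕ := fun r => (r % 2, Tab a b r % 2 ^ (j + 1)) with hψ
  have hmaps : ∀ r ∈ Finset.range (2 ^ (j + 2)), ψ r ∈ Finset.range 2 ×ˢ Finset.range (2 ^ (j + 1)) := by
    intro r _
    simp only [hψ, Finset.mem_product, Finset.mem_range]
    exact ⟨Nat.mod_lt _ (by norm_num), Nat.mod_lt _ (by positivity)⟩
  have hinj : Set.InjOn ψ (Finset.range (2 ^ (j + 2))) := by
    intro x hx y hy hxy
    simp only [Finset.coe_range, Set.mem_Iio] at hx hy
    simp only [hψ, Prod.mk.injEq] at hxy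
    have := key_inj a b ha hb (j + 1) x y hxy.1 hxy.2
    rwa [Nat.mod_eq_of_lt hx, Nat.mod_eq_of_lt hy] at this
  have hcard : (Finset.range 2 ×ˢ Finset.range (2 ^ (j + 1))).card ≤ (Finset.range (2 ^ (j + 2))).card := by
    simp [Finset.card_product]
    ring_nf
    omega
  have hsurj := Finset.surj_on_of_inj_on_of_card_le (fun r (_ : r ∈ Finset.range (2 ^ (j + 2))) => ψ r)
    (fun r hr => hmaps r hr)
    (fun r s hr hs e => hinj (by simpa using hr) (by simpa using hs) e) hcard
  have hkey : ((Finset.range (2 ^ (j + 2))).filter (fun r => P (Tab a b r % 2 ^ (j + 1)))).card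
      = (Finset.range 2 ×ˢ (Finset.range (2 ^ (j + 1))).filter P).card := by
    apply Finset.card_bij (fun r (_ : r ∈ _) => ψ r)
    · intro r hr
      simp only [Finset.mem_filter] at hr
      have := hmaps r hr.1
      simp only [Finset.mem_product] at this ⊢
      refine ⟨this.1, Finset.mem_filter.2 ⟨this.2, hr.2⟩⟩
    · intro r hr s hs e
      simp only [Finset.mem_filter] at hr hs
      exact hinj (by simpa using hr.1) (by simpa using hs.1) e
    · rintro ⟨u, v⟩ huv
      simp only [Finset.mem_product, Finset.mem_filter] at huv
      obtain ⟨r, hr, hre⟩ := hsurj (u, v) (by simp [Finset.mem_product, huv.1, huv.2.1])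
      have hre' : ψ r = (u, v) := hre.symm
      refine ⟨r, Finset.mem_filter.2 ⟨hr, ?_⟩, hre'⟩
      have h2 : Tab a b r % 2 ^ (j + 1) = v := congrArg Prod.snd hre'
      rw [h2]; exact huv.2.2
  rw [hkey, Finset.card_product, Finset.card_range]

lemma odd_count (a b : ℕ) (ha : a % 2 = 1) (hb : b % 2 = 1) :
    ∀ k, ((Finset.range (2 ^ (k + 1))).filter
      (fun r => (Tab a b)^[k] r % 2 = 1)).card = 2 ^ k := by
  intro k
  induction k with
  | zero =>
    norm_num
    decide
  | succ k ih =>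
    have hfe : ∀ r, (Tab a b)^[k + 1] r % 2
        = (Tab a b)^[k] (Tab a b r % 2 ^ (k + 1)) % 2 := by
      intro r
      rw [Function.iterate_succ_apply]
      apply tab_iter_mod a b ha hb k 2
      have h1 : (2:ℕ) ^ k * 2 = 2 ^ (k + 1) := by ring
      rw [h1, Nat.mod_mod_of_dvd _ dvd_rfl]
    have heq : (Finset.range (2 ^ (k + 2))).filter (fun r => (Tab a b)^[k + 1] r % 2 = 1)
        = (Finset.range (2 ^ (k + 2))).filter
            (fun r => (Tab a b)^[k] (Tab a b r % 2 ^ (k + 1)) % 2 = 1) :=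
      Finset.filter_congr (fun r _ => by rw [hfe r])
    rw [heq, double_count a b ha hb k (fun t => (Tab a b)^[k] t % 2 = 1), ih]
    ring

lemma even_count (a b : ℕ) (ha : a % 2 = 1) (hb : b % 2 = 1) :
    ∀ k, ((Finset.range (2 ^ (k + 1))).filter
      (fun r => (Tab a b)^[k] r % 2 = 0)).card = 2 ^ k := by
  intro k
  have hsplit := Finset.card_filter_add_card_filter_not
    (s := Finset.range (2 ^ (k + 1))) (p := fun r => (Tab a b)^[k] r % 2 = 1)
  have h1 := odd_count a b ha hb k
  have heq : (Finset.range (2 ^ (k + 1))).filter (fun r => ¬ (Tab a b)^[k] r % 2 = 1)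
      = (Finset.range (2 ^ (k + 1))).filter (fun r => (Tab a b)^[k] r % 2 = 0) :=
    Finset.filter_congr (fun r _ => by constructor <;> intro h <;> omega)
  rw [heq, h1] at hsplit
  rw [Finset.card_range] at hsplit
  have : (2:ℕ) ^ (k + 1) = 2 ^ k + 2 ^ k := by ring
  omega

lemma count_period (d : ℕ) (Q : ℕ → Prop) [DecidablePred Q] :
    ∀ m, ((Finset.range (m * d)).filter (fun x => Q (x % d))).card
      = m * ((Finset.range d).filter (fun x => Q (x % d))).card := by
  intro m
  induction m with
  | zero => simp
  | succ m ih =>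
    have hs : (m + 1) * d = m * d + d := by ring
    rw [hs, Finset.range_add, Finset.filter_union, Finset.card_union_of_disjoint, ih]
    · have hmap : ((Finset.range d).map (addLeftEmbedding (m * d))).filter
          (fun x => Q (x % d))
          = ((Finset.range d).filter (fun x => Q (x % d))).map (addLeftEmbedding (m * d)) := by
        rw [Finset.filter_map]
        congr 1
        apply Finset.filter_congr
        intro x _
        have : (m * d + x) % d = x % d := by rw [add_comm, Nat.add_mul_mod_self_right]
        simp [addLeftEmbedding, this]
      rw [hmap, Finset.card_map]
      ring
    · apply Finset.disjoint_left.2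
      intro x hx hx2
      simp only [Finset.mem_filter, Finset.mem_range] at hx
      simp only [Finset.mem_filter, Finset.mem_map, addLeftEmbedding] at hx2
      obtain ⟨⟨y, hy, hyx⟩, -⟩ := hx2
      simp only [Function.Embedding.coeFn_mk] at hyx
      omega

lemma icc_range (N : ℕ) (hN : 1 ≤ N) (q : ℕ → Prop) [DecidablePred q] (h : q 0 ↔ q N) :
    ((Finset.Icc 1 N).filter q).card = ((Finset.range N).filter q).card := by
  have h1 : Finset.range N = insert 0 (Finset.Icc 1 (N - 1)) := by
    ext x; simp only [Finset.mem_range, Finset.mem_insert, Finset.mem_Icc]; omega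
  have h2 : Finset.Icc 1 N = insert N (Finset.Icc 1 (N - 1)) := by
    ext x; simp only [Finset.mem_insert, Finset.mem_Icc]; omega
  have hnm0 : 0 ∉ (Finset.Icc 1 (N - 1)).filter q := by
    simp [Finset.mem_filter]
  have hnmN : N ∉ (Finset.Icc 1 (N - 1)).filter q := by
    simp only [Finset.mem_filter, Finset.mem_Icc]
    intro h'
    omega
  rw [h1, h2, Finset.filter_insert, Finset.filter_insert]
  by_cases hq : q 0
  · rw [if_pos hq, if_pos (h.1 hq), Finset.card_insert_of_notMem hnmN,
      Finset.card_insert_of_notMem hnm0]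
  · rw [if_neg hq, if_neg (fun hc => hq (h.2 hc))]

lemma main_count (a b : ℕ) (ha : a % 2 = 1) (hb : b % 2 = 1) (M n : ℕ)
    (hM : 2 ≤ M) (hn1 : 1 ≤ n) (hnM : n ≤ M - 1) (v : ℕ)
    (hv : ((Finset.range (2 ^ n)).filter
      (fun r => (Tab a b)^[n - 1] r % 2 = v)).card = 2 ^ (n - 1)) :
    ((Finset.Icc 1 (2 ^ M)).filter
      (fun x => (Tab a b)^[n - 1] (x % 2 ^ n) % 2 = v)).card = 2 ^ (M - 1) := by
  have hdvd : (2:ℕ) ^ M % 2 ^ n = 0 := by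
    obtain ⟨c, hc⟩ : (2:ℕ) ^ n ∣ 2 ^ M := pow_dvd_pow 2 (by omega)
    rw [hc, Nat.mul_mod_right]
  have h1 := icc_range (2 ^ M) (Nat.one_le_two_pow)
    (fun x => (Tab a b)^[n - 1] (x % 2 ^ n) % 2 = v)
    (by simp only [Nat.zero_mod, hdvd])
  rw [h1]
  have h2 : (2:ℕ) ^ M = 2 ^ (M - n) * 2 ^ n := by
    rw [← pow_add]; congr 1; omega
  rw [h2, count_period (2 ^ n) (fun r => (Tab a b)^[n - 1] r % 2 = v) (2 ^ (M - n))]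
  have h3 : ((Finset.range (2 ^ n)).filter
      (fun x => (Tab a b)^[n - 1] (x % 2 ^ n) % 2 = v)).card = 2 ^ (n - 1) := by
    rw [← hv]
    apply congrArg
    apply Finset.filter_congr
    intro x hx
    rw [Nat.mod_eq_of_lt (Finset.mem_range.1 hx)]
  rw [h3, ← pow_add]
  congr 1
  omega

end TabAux

theorem general_half_increase_half_decrease (a b : ℕ) (ha : Odd a) (hb : Odd b)
    (ha3 : 3 ≤ a) (M n : ℕ) (hM : 2 ≤ M) (hn1 : 1 ≤ n) (hnM : n ≤ M - 1) :
    ((Finset.Icc 1 (2 ^ M)).filter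
        (fun x => (Tab a b)^[n] x > (Tab a b)^[n - 1] x)).card = 2 ^ (M - 1) ∧
    ((Finset.Icc 1 (2 ^ M)).filter
        (fun x => (Tab a b)^[n] x < (Tab a b)^[n - 1] x)).card = 2 ^ (M - 1) := by
  obtain ⟨a', ha'⟩ := ha
  obtain ⟨b', hb'⟩ := hb
  have ha2 : a % 2 = 1 := by omega
  have hb2 : b % 2 = 1 := by omega
  have hn : n = (n - 1) + 1 := by omega
  have hpar : ∀ x, 1 ≤ x → (Tab a b)^[n - 1] x % 2 = (Tab a b)^[n - 1] (x % 2 ^ n) % 2 := by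
    intro x _
    apply TabAux.tab_iter_mod a b ha2 hb2 (n - 1) 2
    have h1 : (2:ℕ) ^ (n - 1) * 2 = 2 ^ n := by
      rw [← pow_succ]; congr 1; omega
    rw [h1, Nat.mod_mod_of_dvd _ dvd_rfl]
  have hgt : ∀ x ∈ Finset.Icc 1 (2 ^ M),
      ((Tab a b)^[n] x > (Tab a b)^[n - 1] x ↔ (Tab a b)^[n - 1] (x % 2 ^ n) % 2 = 1) := by
    intro x hx
    have hx1 : 1 ≤ x := (Finset.mem_Icc.1 hx).1
    have hy1 : 1 ≤ (Tab a b)^[n - 1] x := TabAux.tab_iter_pos a b hb2 ha3 _ x hx1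
    rw [← hpar x hx1, ← TabAux.tab_gt_iff a b hb2 ha3 _ hy1]
    constructor <;> intro h <;>
      [rwa [hn, Function.iterate_succ_apply'] at h; rwa [hn, Function.iterate_succ_apply']]
  have hlt : ∀ x ∈ Finset.Icc 1 (2 ^ M),
      ((Tab a b)^[n] x < (Tab a b)^[n - 1] x ↔ (Tab a b)^[n - 1] (x % 2 ^ n) % 2 = 0) := by
    intro x hx
    have hx1 : 1 ≤ x := (Finset.mem_Icc.1 hx).1
    have hy1 : 1 ≤ (Tab a b)^[n - 1] x := TabAux.tab_iter_pos a b hb2 ha3 _ x hx1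
    rw [← hpar x hx1, ← TabAux.tab_lt_iff a b hb2 ha3 _ hy1]
    constructor <;> intro h <;>
      [rwa [hn, Function.iterate_succ_apply'] at h; rwa [hn, Function.iterate_succ_apply']]
  have hocount : ((Finset.range (2 ^ n)).filter
      (fun r => (Tab a b)^[n - 1] r % 2 = 1)).card = 2 ^ (n - 1) := by
    have := TabAux.odd_count a b ha2 hb2 (n - 1)
    rwa [show (n - 1) + 1 = n from by omega] at this
  have hecount : ((Finset.range (2 ^ n)).filter
      (fun r => (Tab a b)^[n - 1] r % 2 = 0)).card = 2 ^ (n - 1) := by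
    have := TabAux.even_count a b ha2 hb2 (n - 1)
    rwa [show (n - 1) + 1 = n from by omega] at this
  constructor
  · rw [Finset.filter_congr hgt]
    exact TabAux.main_count a b ha2 hb2 M n hM hn1 hnM 1 hocount
  · rw [Finset.filter_congr hlt]
    exact TabAux.main_count a b ha2 hb2 M n hM hn1 hnM 0 hecount
end
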